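/- Let R be a commutative ring, Y = Spec(B) an affine scheme of finite type over R embedded as a closed subscheme of A^n_R via a surjection R[x_1,...,x_n] → B, and let Ȳ be its projective closure in P^n_R. Suppose v = (v_1,...,v_d) is a tuple of linear forms in R[x_1,...,x_n] such that the closed subscheme L_v = V_+(x_0, v̄_1, ..., v̄_d) of P^n_R (where v̄_i is the homogenisation/linear part of v_i) satisfies L_v ∩ Ȳ = ∅. Then the morphism v : Y → A^d_R induced by the v_i is finite. -/

import Mathlib

open MvPolynomial

attribute [local instance] MvPolynomial.gradedAlgebra

noncomputable section

/-- The homogenisation of `p ∈ R[x₁,…,x_n]` with respect to a new variable `x₀`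
(of degree `totalDegree p`), living in `R[x₀,x₁,…,x_n]`. -/
def homogenize {R : Type} [CommRing R] {n : ℕ} (p : MvPolynomial (Fin n) R) :
    MvPolynomial (Fin (n + 1)) R :=
  ∑ m ∈ p.support,
    monomial (Finsupp.mapDomain Fin.succ m + Finsupp.single 0 (p.totalDegree - m.degree))
      (coeff m p)

namespace Stmt12Aux

lemma degree_eq_sum {σ : Type*} (m : σ →₀ ℕ) : m.degree = m.sum fun _ e => e := rfl

lemma degree_add {σ : Type*} (a b : σ →₀ ℕ) :
    (a + b).degree = a.degree + b.degree := by
  simp [Finsupp.degree_eq_weight_one, map_add]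

lemma degree_single {σ : Type*} (i : σ) (e : ℕ) : (Finsupp.single i e).degree = e := by
  classical
  simp [Finsupp.degree_eq_weight_one, Finsupp.weight_apply, Finsupp.sum_single_index]

lemma degree_mapDomain {σ τ : Type*} (f : σ → τ) (m : σ →₀ ℕ) :
    (Finsupp.mapDomain f m).degree = m.degree := by
  classical
  rw [degree_eq_sum, degree_eq_sum]
  exact Finsupp.sum_mapDomain_index (fun _ => rfl) (fun _ _ _ => rfl)

variable {R : Type} [CommRing R] {n : ℕ}

lemma homogenize_mem (p : MvPolynomial (Fin n) R) :
    homogenize p ∈ homogeneousSubmodule (Fin (n + 1)) R p.totalDegree := by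
  apply Submodule.sum_mem
  intro m hm
  rw [mem_homogeneousSubmodule]
  apply isHomogeneous_monomial
  rw [degree_add, degree_mapDomain, degree_single]
  have : m.degree ≤ p.totalDegree := by
    rw [degree_eq_sum]; exact le_totalDegree hm
  omega

/-- The "graded dehomogenisation" map `R[x₀,…,x_n] → R[x₁,…,x_n][t]`,
`x₀ ↦ t`, `x_{j+1} ↦ x_j t`. -/
def Phi : MvPolynomial (Fin (n + 1)) R →ₐ[R] Polynomial (MvPolynomial (Fin n) R) :=
  aeval (Fin.cases Polynomial.X fun j => Polynomial.C (X j) * Polynomial.X)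

@[simp] lemma Phi_X_zero : Phi (R := R) (n := n) (X 0) = Polynomial.X := by
  simp [Phi]

@[simp] lemma Phi_X_succ (i : Fin n) :
    Phi (R := R) (X i.succ) = Polynomial.C (X i) * Polynomial.X := by
  simp [Phi]

@[simp] lemma Phi_C (c : R) : Phi (R := R) (n := n) (C c) = Polynomial.C (C c) := by
  simp [Phi, MvPolynomial.algebraMap_eq, Polynomial.algebraMap_apply]

lemma Phi_rename_monomial (m : Fin n →₀ ℕ) (c : R) :
    Phi (rename Fin.succ (monomial m c))
      = Polynomial.C (monomial m c) * Polynomial.X ^ m.degree := by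
  have h1 : (monomial m c : MvPolynomial (Fin n) R) = C c * ∏ i ∈ m.support, X i ^ m i := by
    rw [monomial_eq, Finsupp.prod]
  rw [h1]
  simp only [map_mul, map_prod, map_pow, rename_X, rename_C, Phi_C, Phi_X_succ]
  rw [Finset.prod_congr rfl fun i _ => mul_pow (Polynomial.C (X i)) Polynomial.X (m i),
    Finset.prod_mul_distrib, Finset.prod_pow_eq_pow_sum, ← mul_assoc]
  have h2 : (∏ i ∈ m.support, (Polynomial.C (X i) : Polynomial (MvPolynomial (Fin n) R)) ^ m i)
      = Polynomial.C (∏ i ∈ m.support, (X i : MvPolynomial (Fin n) R) ^ m i) := by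
    rw [map_prod]
    exact Finset.prod_congr rfl fun i _ => (map_pow _ _ _).symm
  rw [h2, ← map_mul, ← h1]
  rfl

lemma Phi_rename_homogeneous {q : MvPolynomial (Fin n) R} {e : ℕ}
    (hq : q.IsHomogeneous e) :
    Phi (rename Fin.succ q) = Polynomial.C q * Polynomial.X ^ e := by
  conv_lhs => rw [← support_sum_monomial_coeff q]
  rw [map_sum, map_sum]
  have : ∀ m ∈ q.support,
      Phi (rename Fin.succ (monomial m (coeff m q)))
        = Polynomial.C (monomial m (coeff m q)) * Polynomial.X ^ e := by
    intro m hm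
    rw [Phi_rename_monomial]
    congr 2
    have h := hq (mem_support_iff.mp hm)
    rw [Finsupp.degree_eq_weight_one]
    exact h
  rw [Finset.sum_congr rfl this, ← Finset.sum_mul, ← map_sum, support_sum_monomial_coeff]

lemma Phi_homogenize (p : MvPolynomial (Fin n) R) :
    Phi (homogenize p) = Polynomial.C p * Polynomial.X ^ p.totalDegree := by
  rw [homogenize, map_sum]
  have : ∀ m ∈ p.support,
      Phi (monomial
          (Finsupp.mapDomain Fin.succ m + Finsupp.single 0 (p.totalDegree - m.degree))
          (coeff m p))
        = Polynomial.C (monomial m (coeff m p)) * Polynomial.X ^ p.totalDegree := by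
    intro m hm
    have hsplit : (monomial
        (Finsupp.mapDomain Fin.succ m + Finsupp.single 0 (p.totalDegree - m.degree))
        (coeff m p) : MvPolynomial (Fin (n+1)) R)
        = rename Fin.succ (monomial m (coeff m p))
            * X 0 ^ (p.totalDegree - m.degree) := by
      rw [rename_monomial, X_pow_eq_monomial, monomial_mul, mul_one]
    rw [hsplit, map_mul, map_pow, Phi_X_zero, Phi_rename_monomial, mul_assoc, ← pow_add]
    congr 2
    have : m.degree ≤ p.totalDegree := by
      rw [degree_eq_sum]; exact le_totalDegree hm
    omega
  rw [Finset.sum_congr rfl this, ← Finset.sum_mul, ← map_sum, support_sum_monomial_coeff]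

lemma Phi_coeff_totalDegree (c : MvPolynomial (Fin (n + 1)) R) (k : ℕ) :
    ((Phi c).coeff k).totalDegree ≤ k := by
  induction c using MvPolynomial.induction_on generalizing k with
  | C a =>
    rw [Phi_C, Polynomial.coeff_C]
    split
    · simpa using totalDegree_C (R := R) (σ := Fin n) a ▸ Nat.zero_le k
    · simp
  | add p q hp hq =>
    rw [map_add, Polynomial.coeff_add]
    exact le_trans (totalDegree_add _ _) (max_le (hp k) (hq k))
  | mul_X p i hp =>
    rw [map_mul]
    induction i using Fin.cases with
    | zero =>
      rw [Phi_X_zero]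
      cases k with
      | zero => simp
      | succ k => rw [Polynomial.coeff_mul_X]; exact le_trans (hp k) (Nat.le_succ k)
    | succ j =>
      rw [Phi_X_succ, show Phi p * (Polynomial.C (X j) * Polynomial.X)
          = Phi p * Polynomial.C (X j) * Polynomial.X by ring]
      cases k with
      | zero => simp
      | succ k =>
        rw [Polynomial.coeff_mul_X, Polynomial.coeff_mul_C]
        refine le_trans (totalDegree_mul _ _) ?_
        have hXj : (X j : MvPolynomial (Fin n) R).totalDegree ≤ 1 := by
          have h1 := totalDegree_monomial_le (Finsupp.single j 1) (1 : R)
          rw [Finsupp.sum_single_index rfl] at h1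
          exact h1
        have := hp k
        omega

lemma X_totalDegree_le (j : Fin n) : (X j : MvPolynomial (Fin n) R).totalDegree ≤ 1 := by
  have h1 := totalDegree_monomial_le (Finsupp.single j 1) (1 : R)
  rw [Finsupp.sum_single_index rfl] at h1
  exact h1

variable (R n) in
/-- Polynomials of total degree `< k`. -/
def Dd : ℕ → Submodule R (MvPolynomial (Fin n) R)
  | 0 => ⊥
  | (m + 1) => restrictTotalDegree (Fin n) R m

lemma mem_Dd_of {x : MvPolynomial (Fin n) R} {m : ℕ} (h : x.totalDegree ≤ m) :
    x ∈ Dd R n (m + 1) :=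
  (mem_restrictTotalDegree _ _ _).mpr h

variable {d : ℕ}

/-- The filtration submodule `I + A_{<k} + ∑ⱼ vⱼ·A_{<k}`. -/
def W (I : Ideal (MvPolynomial (Fin n) R)) (v : Fin d → MvPolynomial (Fin n) R) (k : ℕ) :
    Submodule R (MvPolynomial (Fin n) R) :=
  (I.restrictScalars R ⊔ Dd R n k) ⊔
    ⨆ j, (Dd R n k).map (LinearMap.mulLeft R (v j))

lemma mem_W_of_mem_ideal {I : Ideal (MvPolynomial (Fin n) R)}
    {v : Fin d → MvPolynomial (Fin n) R} {k : ℕ} {x : MvPolynomial (Fin n) R}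
    (h : x ∈ I) : x ∈ W I v k :=
  Submodule.mem_sup_left (Submodule.mem_sup_left (by simpa using h))

lemma mem_W_of_mem_Dd {I : Ideal (MvPolynomial (Fin n) R)}
    {v : Fin d → MvPolynomial (Fin n) R} {k : ℕ} {x : MvPolynomial (Fin n) R}
    (h : x ∈ Dd R n k) : x ∈ W I v k :=
  Submodule.mem_sup_left (Submodule.mem_sup_right h)

lemma mem_W_of_mul {I : Ideal (MvPolynomial (Fin n) R)}
    {v : Fin d → MvPolynomial (Fin n) R} {k : ℕ} {x : MvPolynomial (Fin n) R}
    (j : Fin d) (h : x ∈ Dd R n k) : v j * x ∈ W I v k :=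
  Submodule.mem_sup_right (Submodule.mem_iSup_of_mem j ⟨x, h, by simp⟩)

lemma mul_mem_Dd {x a : MvPolynomial (Fin n) R} {j k : ℕ}
    (ha : a.totalDegree ≤ j) (hx : x ∈ Dd R n k) : a * x ∈ Dd R n (j + k) := by
  cases k with
  | zero =>
    have : x = 0 := by simpa [Dd] using hx
    subst this
    simp [Dd]
  | succ m =>
    have hx' : x.totalDegree ≤ m := (mem_restrictTotalDegree _ _ _).mp hx
    have : (a * x).totalDegree ≤ j + m := le_trans (totalDegree_mul a x) (by omega)
    have h2 : j + (m + 1) = (j + m) + 1 := by omega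
    rw [h2]
    exact mem_Dd_of this

lemma mul_mem_W {I : Ideal (MvPolynomial (Fin n) R)}
    {v : Fin d → MvPolynomial (Fin n) R} {x a : MvPolynomial (Fin n) R} {j k : ℕ}
    (ha : a.totalDegree ≤ j) (hx : x ∈ W I v k) : a * x ∈ W I v (j + k) := by
  obtain ⟨y, hy, z, hz, rfl⟩ := Submodule.mem_sup.mp hx
  obtain ⟨y1, hy1, y2, hy2, rfl⟩ := Submodule.mem_sup.mp hy
  rw [mul_add, mul_add]
  refine add_mem (add_mem ?_ ?_) ?_
  · exact mem_W_of_mem_ideal (I.mul_mem_left a (by simpa using hy1))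
  · exact mem_W_of_mem_Dd (mul_mem_Dd ha hy2)
  · refine Submodule.iSup_induction _ hz (motive := fun z => a * z ∈ W I v (j + k)) ?_ ?_ ?_
    · rintro i x ⟨e, he, rfl⟩
      rw [LinearMap.mulLeft_apply, mul_left_comm]
      exact mem_W_of_mul i (mul_mem_Dd ha he)
    · simp
    · intro x y hx hy
      rw [mul_add]
      exact add_mem hx hy

lemma coeff_Phi_mem_W (I : Ideal (MvPolynomial (Fin n) R))
    (v : Fin d → MvPolynomial (Fin n) R)
    (hv : ∀ i, v i ∈ homogeneousSubmodule (Fin n) R 1)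
    {ξ : MvPolynomial (Fin (n + 1)) R}
    (hξ : ξ ∈ Ideal.span ((homogenize '' (I : Set (MvPolynomial (Fin n) R))) ∪
      ({(X 0 : MvPolynomial (Fin (n + 1)) R)} ∪
        Set.range fun i => rename Fin.succ (v i)))) :
    ∀ k, (Phi ξ).coeff k ∈ W I v k := by
  induction hξ using Submodule.span_induction with
  | mem x hx =>
    intro k
    rcases hx with ⟨p, hp, rfl⟩ | (rfl | ⟨i, rfl⟩)
    · rw [Phi_homogenize, Polynomial.coeff_C_mul, Polynomial.coeff_X_pow,
        mul_ite, mul_one, mul_zero]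
      split
      · exact mem_W_of_mem_ideal hp
      · exact zero_mem _
    · rw [Phi_X_zero, Polynomial.coeff_X]
      split
      · next h =>
        subst h
        exact mem_W_of_mem_Dd (mem_Dd_of (by simp))
      · exact zero_mem _
    · rw [Phi_rename_homogeneous ((mem_homogeneousSubmodule _ _).mp (hv i)),
        pow_one, Polynomial.coeff_C_mul, Polynomial.coeff_X, mul_ite, mul_one, mul_zero]
      split
      · next h =>
        subst h
        have : v i * 1 ∈ W I v 1 := mem_W_of_mul i (mem_Dd_of (by simp))
        simpa using this
      · exact zero_mem _
  | zero => intro k; simp only [map_zero, Polynomial.coeff_zero]; exact zero_mem _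
  | add x y hx hy ihx ihy =>
    intro k
    rw [map_add, Polynomial.coeff_add]
    exact add_mem (ihx k) (ihy k)
  | smul a x hx ih =>
    intro k
    rw [smul_eq_mul, map_mul, Polynomial.coeff_mul]
    refine Submodule.sum_mem _ fun pq hpq => ?_
    have hk : pq.1 + pq.2 = k := Finset.HasAntidiagonal.mem_antidiagonal.mp hpq
    rw [← hk]
    exact mul_mem_W (Phi_coeff_totalDegree a pq.1) (ih pq.2)

end Stmt12Aux



open Stmt12Aux

/-- Lemma 3.4 of the paper (Schmidt–Strunk, Lemma 2.3). -/
theorem stmt12 (R : Type) [CommRing R] (n d : ℕ)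
    (B : Type) [CommRing B] [Algebra R B]
    (π : MvPolynomial (Fin n) R →ₐ[R] B) (hπ : Function.Surjective π)
    (v : Fin d → MvPolynomial (Fin n) R)
    (hv : ∀ i, v i ∈ homogeneousSubmodule (Fin n) R 1)
    (hdisj :
      ProjectiveSpectrum.zeroLocus (homogeneousSubmodule (Fin (n + 1)) R)
          (homogenize '' (RingHom.ker π.toRingHom : Set (MvPolynomial (Fin n) R))) ∩
        ProjectiveSpectrum.zeroLocus (homogeneousSubmodule (Fin (n + 1)) R)
          ({(X 0 : MvPolynomial (Fin (n + 1)) R)} ∪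
            Set.range fun i => rename Fin.succ (v i))
        = ∅) :
    (aeval fun j : Fin d => π (v j) :
        MvPolynomial (Fin d) R →ₐ[R] B).toRingHom.Finite := by
  classical
  set I : Ideal (MvPolynomial (Fin n) R) := RingHom.ker π.toRingHom with hIdef
  set S : Set (MvPolynomial (Fin (n + 1)) R) :=
    (homogenize '' (I : Set (MvPolynomial (Fin n) R))) ∪
      ({(X 0 : MvPolynomial (Fin (n + 1)) R)} ∪
        Set.range fun i => rename Fin.succ (v i)) with hSdef
  set J : Ideal (MvPolynomial (Fin (n + 1)) R) := Ideal.span S with hJdef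
  have hJhom : J.IsHomogeneous (homogeneousSubmodule (Fin (n + 1)) R) := by
    apply Ideal.homogeneous_span
    rintro x (⟨p, hp, rfl⟩ | (rfl | ⟨i, rfl⟩))
    · exact ⟨p.totalDegree, homogenize_mem p⟩
    · exact ⟨1, (mem_homogeneousSubmodule _ _).mpr (isHomogeneous_X _ _)⟩
    · exact ⟨1, (mem_homogeneousSubmodule _ _).mpr
        (((mem_homogeneousSubmodule _ _).mp (hv i)).rename_isHomogeneous)⟩
  -- Step 1: every `X i.succ` lies in the radical of `J`.
  have hrad : ∀ i : Fin n, (X i.succ : MvPolynomial (Fin (n + 1)) R) ∈ J.radical := by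
    intro i
    by_contra hmem
    rw [hJhom.radical_eq, Ideal.mem_sInf] at hmem
    push_neg at hmem
    obtain ⟨q, ⟨hqhom, hqJ, hqprime⟩, hXq⟩ := hmem
    have hXhom : (X i.succ : MvPolynomial (Fin (n + 1)) R)
        ∈ homogeneousSubmodule (Fin (n + 1)) R 1 :=
      (mem_homogeneousSubmodule _ _).mpr (isHomogeneous_X _ _)
    have hnotirr :
        ¬ HomogeneousIdeal.irrelevant (homogeneousSubmodule (Fin (n + 1)) R)
          ≤ (⟨q, hqhom⟩ : HomogeneousIdeal (homogeneousSubmodule (Fin (n + 1)) R)) := by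
      intro hle
      refine hXq (hle ?_)
      rw [HomogeneousIdeal.mem_irrelevant_iff, GradedRing.proj_apply,
        DirectSum.decompose_of_mem_ne (homogeneousSubmodule (Fin (n + 1)) R) hXhom
          one_ne_zero]
    set pt : ProjectiveSpectrum (homogeneousSubmodule (Fin (n + 1)) R) :=
      ⟨⟨q, hqhom⟩, hqprime, hnotirr⟩ with hpt
    have hptmem : pt ∈ (∅ : Set (ProjectiveSpectrum (homogeneousSubmodule (Fin (n + 1)) R))) := by
      rw [← hdisj]
      constructor
      · exact fun x hx => hqJ (Ideal.subset_span (Or.inl hx))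
      · exact fun x hx => hqJ (Ideal.subset_span (Or.inr hx))
    simp at hptmem
  -- Step 2: the filtration relations.
  have hXW : ∀ i : Fin n, ∃ N : ℕ, 1 ≤ N ∧
      (X i : MvPolynomial (Fin n) R) ^ N ∈ W I v N := by
    intro i
    obtain ⟨N, hN⟩ := hrad i
    have hkey := coeff_Phi_mem_W I v hv hN N
    rw [map_pow, Phi_X_succ, mul_pow, ← map_pow,
      Polynomial.coeff_C_mul, Polynomial.coeff_X_pow] at hkey
    rw [if_pos rfl, mul_one] at hkey
    refine ⟨N + 1, le_add_self, ?_⟩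
    have h2 := mul_mem_W (X_totalDegree_le i) hkey
    rw [show N + 1 = 1 + N by omega, pow_add, pow_one]
    exact h2
  choose N hN1 hNW using hXW
  set M : ℕ := ∑ i : Fin n, (N i - 1) with hMdef
  -- Step 3: module finiteness.
  set P := MvPolynomial (Fin d) R with hPdef
  set f : MvPolynomial (Fin d) R →ₐ[R] B := aeval fun j : Fin d => π (v j) with hfdef
  letI : Algebra P B := f.toRingHom.toAlgebra
  haveI : IsScalarTower R P B :=
    IsScalarTower.of_algebraMap_eq fun r => (f.commutes r).symm
  set G : Set B := π '' ((fun m : Fin n →₀ ℕ =>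
    (monomial m 1 : MvPolynomial (Fin n) R)) '' {m | m.degree ≤ M}) with hGdef
  have hGfin : G.Finite := ((Finsupp.finite_of_degree_le M).image _).image _
  have main : ∀ k : ℕ, ∀ a : MvPolynomial (Fin n) R, a.totalDegree ≤ k →
      π a ∈ Submodule.span P G := by
    intro k
    induction k using Nat.strong_induction_on with
    | _ k ih =>
      intro a ha
      have hexp : π a = ∑ m ∈ a.support, π (monomial m (coeff m a)) := by
        rw [← map_sum, support_sum_monomial_coeff]
      rw [hexp]
      refine Submodule.sum_mem _ fun m hm => ?_
      have hmk : m.degree ≤ k := le_trans (le_totalDegree hm) ha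
      by_cases hcase : ∀ i, m i < N i
      · -- small monomial: a generator up to a scalar from `R`
        have hdm : m.degree ≤ M := by
          rw [Finsupp.degree]
          calc ∑ i ∈ m.support, m i ≤ ∑ i : Fin n, m i :=
                Finset.sum_le_sum_of_subset (Finset.subset_univ _)
            _ ≤ ∑ i : Fin n, (N i - 1) := Finset.sum_le_sum fun i _ => by
                have := hcase i; omega
        have : (monomial m (coeff m a) : MvPolynomial (Fin n) R)
            = coeff m a • monomial m 1 := by
          rw [smul_monomial, smul_eq_mul, mul_one]
        rw [this, map_smul, ← algebraMap_smul P (coeff m a)]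
        exact Submodule.smul_mem _ _ (Submodule.subset_span ⟨_, ⟨m, hdm, rfl⟩, rfl⟩)
      · push_neg at hcase
        obtain ⟨i, hi⟩ := hcase
        have hsingle : Finsupp.single i (N i) ≤ m := Finsupp.single_le_iff.mpr hi
        set β : Fin n →₀ ℕ := m - Finsupp.single i (N i) with hβdef
        have hβ : β + Finsupp.single i (N i) = m := tsub_add_cancel_of_le hsingle
        have hβdeg : β.degree + N i = m.degree := by
          conv_rhs => rw [← hβ]
          rw [degree_add, degree_single]
        have hdeg1 : 1 ≤ m.degree := le_trans (hN1 i)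
          (le_trans (Finsupp.le_degree i m) le_rfl |>.trans' hi |>.trans
            (le_of_eq rfl))
        have hmon : (monomial m (coeff m a) : MvPolynomial (Fin n) R)
            = monomial β (coeff m a) * X i ^ N i := by
          rw [X_pow_eq_monomial, monomial_mul, mul_one, hβ]
        rw [hmon]
        -- the key claim, proved for every element of `W I v (N i)`
        have claim : ∀ w ∈ W I v (N i),
            π (monomial β (coeff m a) * w) ∈ Submodule.span P G := by
          intro w hw
          obtain ⟨y, hy, z, hz, rfl⟩ := Submodule.mem_sup.mp hw
          obtain ⟨y1, hy1, y2, hy2, rfl⟩ := Submodule.mem_sup.mp hy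
          rw [mul_add, mul_add, map_add, map_add]
          have hsub : ∀ e : MvPolynomial (Fin n) R, e ∈ Dd R n (N i) →
              π (monomial β (coeff m a) * e) ∈ Submodule.span P G := by
            intro e he
            obtain ⟨t, ht⟩ : ∃ t, N i = t + 1 := ⟨N i - 1, by have := hN1 i; omega⟩
            rw [ht] at he
            have hedeg : e.totalDegree ≤ t := (mem_restrictTotalDegree _ _ _).mp he
            have hprod : (monomial β (coeff m a) * e).totalDegree ≤ m.degree - 1 := by
              refine le_trans (totalDegree_mul _ _) ?_
              have h1 : (monomial β (coeff m a) : MvPolynomial (Fin n) R).totalDegree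
                  ≤ β.degree := by
                have := totalDegree_monomial_le β (coeff m a)
                rw [degree_eq_sum]
                exact this
              omega
            exact ih (m.degree - 1) (by omega) _ (le_trans hprod (by omega))
          refine add_mem (add_mem ?_ ?_) ?_
          · -- the kernel part dies
            have : π y1 = 0 := by
              have := hy1
              simp only [Submodule.restrictScalars_mem] at this
              exact RingHom.mem_ker.mp this
            rw [map_mul, this, mul_zero]
            exact zero_mem _
          · exact hsub y2 hy2
          · refine Submodule.iSup_induction _ hz
              (motive := fun z => π (monomial β (coeff m a) * z) ∈ Submodule.span P G) ?_ ?_ ?_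
            · rintro j x ⟨e, he, rfl⟩
              rw [LinearMap.mulLeft_apply, mul_left_comm, map_mul]
              have : π (v j) = (X j : P) • (1 : B) := by
                rw [Algebra.smul_def, mul_one]
                show π (v j) = f (X j)
                rw [hfdef, aeval_X]
              have hsmul : π (v j) * π (monomial β (coeff m a) * e)
                  = (X j : P) • π (monomial β (coeff m a) * e) := by
                rw [Algebra.smul_def]
                congr 1
                show π (v j) = f (X j)
                rw [hfdef, aeval_X]
              rw [hsmul]
              exact Submodule.smul_mem _ _ (hsub e he)
            · simp only [mul_zero, map_zero]; exact zero_mem _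
            · intro x y hx hy
              rw [mul_add, map_add]
              exact add_mem hx hy
        exact claim _ (hNW i)
  -- conclude
  have : Module.Finite P B := by
    refine ⟨Submodule.fg_def.mpr ⟨G, hGfin, ?_⟩⟩
    rw [eq_top_iff]
    rintro b -
    obtain ⟨a, rfl⟩ := hπ b
    exact main a.totalDegree a le_rfl
  exact this
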